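/- Parametrization of the image of the wedge horizon under the conformal map: for every t > 0 and (x₁,x₂) ∈ ℝ², the horizon point (t, x₁, x₂, t) satisfies φ(t, x₁, x₂, t) = (τ, (1−τ)·e), where τ = t/(t + x₁² + x₂² + ¼) ∈ (0,1) and e = (x₁, x₂, ¼ − x₁² − x₂²)/(x₁² + x₂² + ¼) ∈ ℝ³. In particular the image point lies on the upper null mantle of the unit double cone: its time component τ satisfies 0 < τ < 1 and τ + ‖(1−τ)·e‖ = 1. -/

import Mathlib

/-- Minkowski square on ℝ⁴. -/
noncomputable def q (x : Fin 4 → ℝ) : ℝ := x 0 ^ 2 - x 1 ^ 2 - x 2 ^ 2 - x 3 ^ 2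

/-- The unit vector in the 3-direction. -/
noncomputable def e3 : Fin 4 → ℝ := ![0, 0, 0, 1]

/-- The conformal map `φ(x) = ρ(x + ½e₃) − e₃` with `ρ(y) = −y/q(y)`. -/
noncomputable def φ (x : Fin 4 → ℝ) : Fin 4 → ℝ :=
  (-(q (x + (1/2 : ℝ) • e3))⁻¹) • (x + (1/2 : ℝ) • e3) - e3

/-- The horizon point `(t,x₁,x₂,t)` with `t > 0` is mapped by `φ` to
`(τ, (1−τ)·e)` with `τ = t/(t + x₁² + x₂² + ¼)` and
`e = (x₁, x₂, ¼ − x₁² − x₂²)/(x₁² + x₂² + ¼)`; the image lies on the upper null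
mantle of the unit double cone: `0 < τ < 1` and `τ + ‖(1−τ)·e‖ = 1`. -/
theorem horizon_maps_to_mantle (t x₁ x₂ : ℝ) (ht : 0 < t) :
    let r := x₁ ^ 2 + x₂ ^ 2
    let τ := t / (t + r + 1/4)
    φ ![t, x₁, x₂, t] =
      ![τ, (1 - τ) * (x₁ / (r + 1/4)), (1 - τ) * (x₂ / (r + 1/4)),
        (1 - τ) * ((1/4 - r) / (r + 1/4))] ∧
    0 < τ ∧ τ < 1 ∧
    τ + Real.sqrt (((1 - τ) * (x₁ / (r + 1/4))) ^ 2 +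
        ((1 - τ) * (x₂ / (r + 1/4))) ^ 2 +
        ((1 - τ) * ((1/4 - r) / (r + 1/4))) ^ 2) = 1 := by
  intro r τ
  have hrdef : r = x₁ ^ 2 + x₂ ^ 2 := rfl
  have hτdef : τ = t / (t + r + 1/4) := rfl
  have hr : (0:ℝ) ≤ r := by rw [hrdef]; positivity
  have hR : (0:ℝ) < r + 1/4 := by linarith
  have hD : (0:ℝ) < t + r + 1/4 := by linarith
  clear_value τ r
  have hy : (![t, x₁, x₂, t] + (1/2 : ℝ) • e3) = ![t, x₁, x₂, t + 1/2] := by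
    funext i; fin_cases i <;> simp [e3]
  have hq : q ![t, x₁, x₂, t + 1/2] = -(t + r + 1/4) := by
    rw [hrdef]; simp [q]; ring
  have hτlt : τ < 1 := by
    rw [hτdef, div_lt_one hD]; linarith
  refine ⟨?_, ?_, hτlt, ?_⟩
  · have hs : -(q (![t, x₁, x₂, t] + (1/2 : ℝ) • e3))⁻¹ = (t + r + 1/4)⁻¹ := by
      rw [hy, hq, inv_neg, neg_neg]
    funext i
    unfold φ
    rw [hs, hy]
    fin_cases i <;> simp [e3] <;> rw [hτdef] <;> field_simp [hD.ne', hR.ne'] <;> ring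
  · rw [hτdef]; exact div_pos ht hD
  · have h4 : x₁ ^ 2 + x₂ ^ 2 + (1/4 - r) ^ 2 = (r + 1/4) ^ 2 := by
      rw [hrdef]; ring
    have step : ((1 - τ) * (x₁ / (r + 1/4))) ^ 2 +
        ((1 - τ) * (x₂ / (r + 1/4))) ^ 2 +
        ((1 - τ) * ((1/4 - r) / (r + 1/4))) ^ 2 =
        (1 - τ) ^ 2 * ((x₁ ^ 2 + x₂ ^ 2 + (1/4 - r) ^ 2) / (r + 1/4) ^ 2) := by
      field_simp [hR.ne']
    rw [step, h4, div_self (by positivity), mul_one,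
      Real.sqrt_sq (by linarith : (0:ℝ) ≤ 1 - τ)]
    ring
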